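/- Let μ be the bracket on ℝ⁶ given by μ(e₁,e₂) = e₅ and μ(e₃,e₄) = e₆ (the direct sum of two Heisenberg algebras). Then: (i) a symmetric 6×6 real matrix D is a derivation of μ if and only if there exist real a,b,c,d,α,β with D = diag([[a,α],[α,b]], [[c,β],[β,d]], a+b, c+d) in block form; (ii) the linear map H with He₁ = e₄, He₂ = e₃, He₃ = e₂, He₄ = e₁, He₅ = −e₆, He₆ = −e₅ is an orthogonal automorphism of μ and satisfies H·diag(a,b,c,d,a+b,c+d)·H⁻¹ = diag(d,c,b,a,c+d,a+b) for all a,b,c,d ∈ ℝ. -/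

import Mathlib

open Matrix

section aux
variable {α : Type*}
@[simp] lemma cv65 (a : α) (u : Fin 5 → α) : vecCons a u 5 = u 4 := rfl
@[simp] lemma cv64 (a : α) (u : Fin 5 → α) : vecCons a u 4 = u 3 := rfl
@[simp] lemma cv63 (a : α) (u : Fin 5 → α) : vecCons a u 3 = u 2 := rfl
@[simp] lemma cv62 (a : α) (u : Fin 5 → α) : vecCons a u 2 = u 1 := rfl
@[simp] lemma cv54 (a : α) (u : Fin 4 → α) : vecCons a u 4 = u 3 := rfl
@[simp] lemma cv53 (a : α) (u : Fin 4 → α) : vecCons a u 3 = u 2 := rfl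
@[simp] lemma cv52 (a : α) (u : Fin 4 → α) : vecCons a u 2 = u 1 := rfl
@[simp] lemma cv43 (a : α) (u : Fin 3 → α) : vecCons a u 3 = u 2 := rfl
@[simp] lemma cv42 (a : α) (u : Fin 3 → α) : vecCons a u 2 = u 1 := rfl
@[simp] lemma cv32 (a : α) (u : Fin 2 → α) : vecCons a u 2 = u 1 := rfl
end aux

/-- The bracket on ℝ⁶ given by μ(e₁,e₂) = e₅, μ(e₃,e₄) = e₆ (bilinear extension);
this is the nilsoliton μ₃₀ = (0,0,0,0,12,34), the sum of two Heisenberg algebras. -/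
def mu30 (x y : Fin 6 → ℝ) : Fin 6 → ℝ :=
  ![0, 0, 0, 0, x 0 * y 1 - x 1 * y 0, x 2 * y 3 - x 3 * y 2]

/-- `D` is a derivation of the bracket `mu30`. -/
def IsDerivMu30 (D : Matrix (Fin 6) (Fin 6) ℝ) : Prop :=
  ∀ x y : Fin 6 → ℝ, D.mulVec (mu30 x y) = mu30 (D.mulVec x) y + mu30 x (D.mulVec y)

/-- `g` is an automorphism of the bracket `mu30`. -/
def IsAutoMu30 (g : Matrix (Fin 6) (Fin 6) ℝ) : Prop :=
  IsUnit g ∧ ∀ x y : Fin 6 → ℝ, g.mulVec (mu30 x y) = mu30 (g.mulVec x) (g.mulVec y)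

/-- The map H with He₁ = e₄, He₂ = e₃, He₃ = e₂, He₄ = e₁, He₅ = −e₆, He₆ = −e₅. -/
def H30 : Matrix (Fin 6) (Fin 6) ℝ :=
  !![0, 0, 0, 1, 0, 0;
     0, 0, 1, 0, 0, 0;
     0, 1, 0, 0, 0, 0;
     1, 0, 0, 0, 0, 0;
     0, 0, 0, 0, 0, -1;
     0, 0, 0, 0, -1, 0]

lemma H30_symm : H30ᵀ = H30 := by
  ext i j
  fin_cases i <;> fin_cases j <;> rfl

lemma H30_mul_transpose : H30 * H30ᵀ = 1 := by
  rw [H30_symm]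
  ext i j
  fin_cases i <;> fin_cases j <;>
    (norm_num [H30, Matrix.mul_apply, Fin.sum_univ_six, Matrix.one_apply, Fin.ext_iff,
      Matrix.vecHead, Matrix.vecTail]; try rfl)

lemma deriv_of_form (a b c d α β : ℝ) : IsDerivMu30 !![a, α, 0, 0, 0, 0;
               α, b, 0, 0, 0, 0;
               0, 0, c, β, 0, 0;
               0, 0, β, d, 0, 0;
               0, 0, 0, 0, a + b, 0;
               0, 0, 0, 0, 0, c + d] := by
  intro x y
  funext k
  fin_cases k <;>
    simp [mu30, mulVec, dotProduct, Fin.sum_univ_six] <;> ring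

set_option linter.unreachableTactic false in
set_option linter.unusedTactic false in
lemma form_of_deriv (D : Matrix (Fin 6) (Fin 6) ℝ) (hs : D.IsSymm) (h : IsDerivMu30 D) :
    ∃ a b c d α β : ℝ,
        D = !![a, α, 0, 0, 0, 0;
               α, b, 0, 0, 0, 0;
               0, 0, c, β, 0, 0;
               0, 0, β, d, 0, 0;
               0, 0, 0, 0, a + b, 0;
               0, 0, 0, 0, 0, c + d] := by
  have hsym : ∀ i j, D j i = D i j := fun i j => by rw [← Matrix.transpose_apply D i j, hs]
  have h01 := h ![1,0,0,0,0,0] ![0,1,0,0,0,0]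
  have h23 := h ![0,0,1,0,0,0] ![0,0,0,1,0,0]
  have h02 := h ![1,0,0,0,0,0] ![0,0,1,0,0,0]
  have h03 := h ![1,0,0,0,0,0] ![0,0,0,1,0,0]
  have h12 := h ![0,1,0,0,0,0] ![0,0,1,0,0,0]
  have h13 := h ![0,1,0,0,0,0] ![0,0,0,1,0,0]
  simp [mu30, funext_iff, mulVec, dotProduct, Fin.sum_univ_six, Fin.forall_fin_succ] at h01 h23 h02 h03 h12 h13
  obtain ⟨h04, h14, h24, h34, h44, h54⟩ := h01
  obtain ⟨h05, h15, h25, h35, h45, h55⟩ := h23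
  obtain ⟨h12', h30'⟩ := h02
  obtain ⟨h13', h20'⟩ := h03
  obtain ⟨h02', h31'⟩ := h12
  obtain ⟨h03', h21'⟩ := h13
  refine ⟨D 0 0, D 1 1, D 2 2, D 3 3, D 0 1, D 2 3, ?_⟩
  ext i j
  fin_cases i <;> fin_cases j <;>
    simp only [Matrix.cons_val_zero, Matrix.cons_val_one, Matrix.head_cons,
      Matrix.cons_val_two, Matrix.cons_val_three, Matrix.cons_val_four,
      cv65, cv64, cv63, cv62, cv54, cv53, cv52, cv43, cv42, cv32,
      Matrix.of_apply, Matrix.vecTail, Matrix.vecHead, Function.comp] <;>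
    first
      | rfl
      | exact hsym _ _
      | assumption
      | exact h12'.symm
      | exact h13'.symm
      | exact h02'.symm
      | exact h03'.symm
      | exact (hsym _ _).trans (by assumption)
      | exact (hsym _ _).trans (by first | exact h12'.symm | exact h13'.symm | exact h02'.symm | exact h03'.symm)

lemma diag6 (a b c d e f : ℝ) :
    Matrix.diagonal ![a, b, c, d, e, f] =
      !![a, 0, 0, 0, 0, 0;
         0, b, 0, 0, 0, 0;
         0, 0, c, 0, 0, 0;
         0, 0, 0, d, 0, 0;
         0, 0, 0, 0, e, 0;
         0, 0, 0, 0, 0, f] := by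
  ext i j
  fin_cases i <;> fin_cases j <;>
    norm_num [Matrix.diagonal_apply, Fin.ext_iff]

set_option maxHeartbeats 1600000 in
theorem stmt16 :
    (∀ D : Matrix (Fin 6) (Fin 6) ℝ, D.IsSymm →
      (IsDerivMu30 D ↔ ∃ a b c d α β : ℝ,
        D = !![a, α, 0, 0, 0, 0;
               α, b, 0, 0, 0, 0;
               0, 0, c, β, 0, 0;
               0, 0, β, d, 0, 0;
               0, 0, 0, 0, a + b, 0;
               0, 0, 0, 0, 0, c + d])) ∧
    H30 * H30ᵀ = 1 ∧ IsAutoMu30 H30 ∧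
    (∀ a b c d : ℝ,
      H30 * Matrix.diagonal ![a, b, c, d, a + b, c + d] * H30⁻¹ =
        Matrix.diagonal ![d, c, b, a, c + d, a + b]) := by
  refine ⟨?_, H30_mul_transpose, ⟨?_, ?_⟩, ?_⟩
  · intro D hs
    constructor
    · exact form_of_deriv D hs
    · rintro ⟨a, b, c, d, α, β, rfl⟩
      exact deriv_of_form a b c d α β
  · exact IsUnit.of_mul_eq_one _ H30_mul_transpose
  · intro x y
    funext k
    fin_cases k <;>
      simp [mu30, H30, mulVec, dotProduct, Fin.sum_univ_six] <;> ring
  · intro a b c d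
    have hinv : H30⁻¹ = H30ᵀ := Matrix.inv_eq_right_inv H30_mul_transpose
    have h1 : H30 * !![a, 0, 0, 0, 0, 0;
         0, b, 0, 0, 0, 0;
         0, 0, c, 0, 0, 0;
         0, 0, 0, d, 0, 0;
         0, 0, 0, 0, a + b, 0;
         0, 0, 0, 0, 0, c + d] =
        !![0, 0, 0, d, 0, 0;
           0, 0, c, 0, 0, 0;
           0, b, 0, 0, 0, 0;
           a, 0, 0, 0, 0, 0;
           0, 0, 0, 0, 0, -(c + d);
           0, 0, 0, 0, -(a + b), 0] := by
      ext i j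
      fin_cases i <;> fin_cases j <;>
        (norm_num [H30, Matrix.mul_apply, Fin.sum_univ_six, Matrix.vecHead, Matrix.vecTail]; try rfl)
    have h2 : !![(0:ℝ), 0, 0, d, 0, 0;
           0, 0, c, 0, 0, 0;
           0, b, 0, 0, 0, 0;
           a, 0, 0, 0, 0, 0;
           0, 0, 0, 0, 0, -(c + d);
           0, 0, 0, 0, -(a + b), 0] * H30 =
        !![d, 0, 0, 0, 0, 0;
           0, c, 0, 0, 0, 0;
           0, 0, b, 0, 0, 0;
           0, 0, 0, a, 0, 0;
           0, 0, 0, 0, c + d, 0;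
           0, 0, 0, 0, 0, a + b] := by
      ext i j
      fin_cases i <;> fin_cases j <;>
        (norm_num [H30, Matrix.mul_apply, Fin.sum_univ_six, Matrix.vecHead, Matrix.vecTail]; try rfl)
    rw [hinv, H30_symm, diag6, diag6, h1, h2]
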